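/- arXiv:2007.05752 — 2 statements merged into one kernel-verified Lean document; each statement's English description precedes it below -/
import Mathlib

section
/- For E ⊂ ℝ² the set defined as the union of balls B(q_j, 2^{−j}) over an enumeration {q_j} of the rational points of ℝ², the non-centered maximal function M𝟙_E is discontinuous at every point x ∈ ℝ² at which the upper approximate limit of 𝟙_E satisfies 𝟙_E^∨(x) = 0. Indeed, at any such x one has M𝟙_E(x) < 1 while there exist points x_j → x with M𝟙_E(x_j) = 1. -/
open MeasureTheory Metric Set Filter Topology
open scoped ENNReal NNReal
noncomputable section
set_option maxHeartbeats 1000000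

/-- The non-centered maximal function of the characteristic function of `E`,
written via volume ratios. -/
noncomputable def maxFnInd {d : ℕ} (E : Set (EuclideanSpace ℝ (Fin d)))
    (x : EuclideanSpace ℝ (Fin d)) : ℝ≥0∞ :=
  ⨆ (z : EuclideanSpace ℝ (Fin d)) (r : ℝ) (_ : 0 < r) (_ : x ∈ ball z r),
    volume (E ∩ ball z r) / volume (ball z r)

lemma maxFnInd_le_one {d : ℕ} (E : Set (EuclideanSpace ℝ (Fin d)))
    (x : EuclideanSpace ℝ (Fin d)) : maxFnInd E x ≤ 1 := by
  refine iSup_le fun z => iSup_le fun r => iSup_le fun hr => iSup_le fun _ => ?_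
  exact le_trans (ENNReal.div_le_div_right (measure_mono inter_subset_right) _)
    ENNReal.div_self_le_one

lemma maxFnInd_eq_one_of_mem {d : ℕ} {E : Set (EuclideanSpace ℝ (Fin d))}
    (hE : IsOpen E) {y : EuclideanSpace ℝ (Fin d)} (hy : y ∈ E) : maxFnInd E y = 1 := by
  obtain ⟨r, hr0, hball⟩ := Metric.isOpen_iff.mp hE y hy
  have hb0 : volume (ball y r) ≠ 0 := (measure_ball_pos _ _ hr0).ne'
  have hbt : volume (ball y r) ≠ ⊤ := measure_ball_lt_top.ne
  have h1 : volume (E ∩ ball y r) / volume (ball y r) = 1 := by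
    rw [inter_eq_self_of_subset_right hball, ENNReal.div_self hb0 hbt]
  refine le_antisymm (maxFnInd_le_one E y) ?_
  rw [maxFnInd]
  exact le_iSup_of_le y (le_iSup_of_le r (le_iSup_of_le hr0
    (le_iSup_of_le (mem_ball_self hr0) h1.ge)))

/-- for `E` the union of balls `B(q_j, 2^{-(j+1)})` over an enumeration of
the rational points of `ℝ²`, the maximal function `M𝟙_E` is discontinuous at every
point of vanishing upper density of `E`: there `M𝟙_E(x) < 1`, yet there are points
`x_j → x` with `M𝟙_E(x_j) = 1`. -/
theorem stmt8 (q : ℕ → EuclideanSpace ℝ (Fin 2))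
    (hq : Set.range q = {x : EuclideanSpace ℝ (Fin 2) | ∀ i, ∃ a : ℚ, x i = (a : ℝ)})
    (E : Set (EuclideanSpace ℝ (Fin 2)))
    (hE : E = ⋃ j : ℕ, ball (q j) ((2 : ℝ)⁻¹ ^ (j + 1)))
    (x : EuclideanSpace ℝ (Fin 2))
    (hx : Tendsto (fun r : ℝ => volume (E ∩ ball x r) / volume (ball x r))
      (𝓝[>] (0 : ℝ)) (𝓝 0)) :
    maxFnInd E x < 1 ∧
    ∃ xs : ℕ → EuclideanSpace ℝ (Fin 2),
      Tendsto xs atTop (𝓝 x) ∧ ∀ j, maxFnInd E (xs j) = 1 := by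
  have hEopen : IsOpen E := by rw [hE]; exact isOpen_iUnion fun j => isOpen_ball
  have hEmeas : MeasurableSet E := hEopen.measurableSet
  set c := volume (ball (0 : EuclideanSpace ℝ (Fin 2)) 1) with hc
  have hc0 : c ≠ 0 := (measure_ball_pos _ _ one_pos).ne'
  have hctop : c ≠ ⊤ := measure_ball_lt_top.ne
  have volball : ∀ (z : EuclideanSpace ℝ (Fin 2)) (r : ℝ), 0 ≤ r →
      volume (ball z r) = ENNReal.ofReal (r ^ 2) * c := by
    intro z r hr
    rw [Measure.addHaar_ball volume z hr, finrank_euclideanSpace_fin]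
  -- total volume of E
  have hvolE : volume E ≤ ENNReal.ofReal (1 / 3) * c := by
    rw [hE]
    calc volume (⋃ j : ℕ, ball (q j) ((2 : ℝ)⁻¹ ^ (j + 1)))
        ≤ ∑' j : ℕ, volume (ball (q j) ((2 : ℝ)⁻¹ ^ (j + 1))) := measure_iUnion_le _
      _ = ∑' j : ℕ, ENNReal.ofReal (((2 : ℝ)⁻¹ ^ (j + 1)) ^ 2) * c := by
          refine tsum_congr fun j => ?_
          exact volball _ _ (by positivity)
      _ = (∑' j : ℕ, ENNReal.ofReal (((2 : ℝ)⁻¹ ^ (j + 1)) ^ 2)) * c := by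
          rw [ENNReal.tsum_mul_right]
      _ = ENNReal.ofReal (1 / 3) * c := by
          congr 1
          have h1 : ∀ j : ℕ, (((2 : ℝ)⁻¹ ^ (j + 1)) ^ 2) = (1/4 : ℝ) * (1/4) ^ j := by
            intro j
            have h2 : ((2 : ℝ)⁻¹ ^ (j + 1)) ^ 2 = ((1/4 : ℝ)) ^ (j + 1) := by
              rw [← pow_mul, mul_comm, pow_mul]; norm_num
            rw [h2, pow_succ']
          have hsummable : Summable fun j : ℕ => (((2 : ℝ)⁻¹ ^ (j + 1)) ^ 2) := by
            simp_rw [h1]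
            exact (summable_geometric_of_lt_one (by norm_num) (by norm_num)).mul_left _
          rw [← ENNReal.ofReal_tsum_of_nonneg (fun j => by positivity) hsummable]
          congr 1
          rw [tsum_congr h1, tsum_mul_left, tsum_geometric_of_lt_one (by norm_num) (by norm_num)]
          norm_num
  -- extract a small-scale density bound
  have h8 : ∀ᶠ r in 𝓝[>] (0 : ℝ),
      volume (E ∩ ball x r) / volume (ball x r) < ENNReal.ofReal (1 / 8) :=
    hx.eventually (gt_mem_nhds (by simp [ENNReal.ofReal_pos]))
  rw [eventually_nhdsWithin_iff, Metric.eventually_nhds_iff] at h8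
  obtain ⟨δ, hδ0, hδ⟩ := h8
  set r₀ : ℝ := min (δ / 2) 1 with hr₀def
  have hr₀0 : 0 < r₀ := lt_min (by linarith) one_pos
  have hr₀1 : r₀ ≤ 1 := min_le_right _ _
  have hsmall : ∀ t : ℝ, 0 < t → t ≤ r₀ →
      volume (E ∩ ball x t) ≤ ENNReal.ofReal (1 / 8) * (ENNReal.ofReal (t ^ 2) * c) := by
    intro t ht0 htr
    have htδ : dist t (0 : ℝ) < δ := by
      rw [Real.dist_eq, sub_zero, abs_of_pos ht0]
      have := min_le_left (δ / 2) 1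
      linarith [htr.trans_lt (lt_of_le_of_lt (le_refl r₀) (by linarith [min_le_left (δ/2) 1] : r₀ < δ))]
    have := hδ htδ ht0
    rw [← volball x t ht0.le]
    have hb0 : volume (ball x t) ≠ 0 := (measure_ball_pos _ _ ht0).ne'
    have hbt : volume (ball x t) ≠ ⊤ := measure_ball_lt_top.ne
    exact le_of_lt ((ENNReal.div_lt_iff (Or.inl hb0) (Or.inl hbt)).mp this)
  -- nonnegativity facts
  have h78 : (0 : ℝ) ≤ 1 - r₀ ^ 2 / 8 := by nlinarith
  -- the key uniform bound on the maximal function at x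
  have key : maxFnInd E x ≤ ENNReal.ofReal (1 - r₀ ^ 2 / 8) := by
    rw [maxFnInd]
    refine iSup_le fun z => iSup_le fun r => iSup_le fun hr => iSup_le fun hxz => ?_
    have hVb : volume (ball z r) = ENNReal.ofReal (r ^ 2) * c := volball z r hr.le
    have hb0 : volume (ball z r) ≠ 0 := (measure_ball_pos _ _ hr).ne'
    have hbt : volume (ball z r) ≠ ⊤ := measure_ball_lt_top.ne
    rw [ENNReal.div_le_iff hb0 hbt]
    rcases le_or_gt r 1 with hr1 | hr1
    · -- small and medium radii
      set t : ℝ := min r r₀ with htdef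
      have ht0 : 0 < t := lt_min hr hr₀0
      have htr : t ≤ r := min_le_left _ _
      have htr₀ : t ≤ r₀ := min_le_right _ _
      set d := dist x z with hd
      have hdr : d < r := mem_ball.mp hxz
      have hd0 : 0 ≤ d := dist_nonneg
      obtain ⟨u, hu, hzu⟩ : ∃ u : EuclideanSpace ℝ (Fin 2), ‖u‖ = 1 ∧ z - x = d • u := by
        rcases eq_or_ne z x with h | h
        · obtain ⟨u, hu⟩ := exists_norm_eq (EuclideanSpace ℝ (Fin 2)) (zero_le_one)
          exact ⟨u, hu, by simp [h, hd, dist_comm]⟩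
        · refine ⟨(‖z - x‖)⁻¹ • (z - x), norm_smul_inv_norm (sub_ne_zero.mpr h), ?_⟩
          have hdn : d = ‖z - x‖ := by rw [hd, dist_comm, dist_eq_norm]
          rw [smul_smul, hdn, mul_inv_cancel₀ (norm_ne_zero_iff.mpr (sub_ne_zero.mpr h)), one_smul]
      set w := x + (t / 2) • u with hw
      have hwx : dist w x = t / 2 := by
        rw [hw, dist_eq_norm, add_sub_cancel_left, norm_smul, hu, mul_one,
          Real.norm_eq_abs, abs_of_pos (by linarith)]
      have hsub1 : ball w (t / 2) ⊆ ball x t := ball_subset_ball' (by rw [hwx]; linarith)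
      have hwz : dist w z = |t / 2 - d| := by
        have : w - z = (t / 2 - d) • u := by
          have : w - z = (t / 2) • u - (z - x) := by rw [hw]; abel
          rw [this, hzu, ← sub_smul]
        rw [dist_eq_norm, this, norm_smul, hu, mul_one, Real.norm_eq_abs]
      have hsub2 : ball w (t / 2) ⊆ ball z r := by
        refine ball_subset_ball' ?_
        rw [hwz]
        rcases le_or_gt d (t / 2) with h | h
        · rw [abs_of_nonneg (by linarith)]; linarith
        · rw [abs_of_neg (by linarith)]; linarith
      have hwvol : volume (ball w (t / 2)) = ENNReal.ofReal ((t / 2) ^ 2) * c :=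
        volball _ _ (by linarith)
      have hEt := hsmall t ht0 htr₀
      -- lower bound for the complement's volume
      have key2 : ENNReal.ofReal (t ^ 2 / 8) * c ≤ volume (ball z r \ E) := by
        have hfin : ENNReal.ofReal (1 / 8) * (ENNReal.ofReal (t ^ 2) * c) ≠ ⊤ :=
          ENNReal.mul_ne_top ENNReal.ofReal_ne_top (ENNReal.mul_ne_top ENNReal.ofReal_ne_top hctop)
        have h4 : ENNReal.ofReal ((t / 2) ^ 2) * c =
            ENNReal.ofReal (t ^ 2 / 8) * c + ENNReal.ofReal (1 / 8) * (ENNReal.ofReal (t ^ 2) * c) := by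
          rw [← mul_assoc, ← ENNReal.ofReal_mul (by norm_num), ← add_mul,
            ← ENNReal.ofReal_add (by positivity) (by positivity)]
          congr 2
          ring
        have hchain : ENNReal.ofReal ((t / 2) ^ 2) * c ≤
            volume (ball z r \ E) + ENNReal.ofReal (1 / 8) * (ENNReal.ofReal (t ^ 2) * c) := by
          calc ENNReal.ofReal ((t / 2) ^ 2) * c = volume (ball w (t / 2)) := hwvol.symm
            _ = volume (ball w (t / 2) \ E) + volume (ball w (t / 2) ∩ E) :=
                (measure_diff_add_inter _ hEmeas).symm
            _ ≤ volume (ball z r \ E) + volume (E ∩ ball x t) := by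
                refine add_le_add (measure_mono (diff_subset_diff_left hsub2))
                  (measure_mono fun y hy => ⟨hy.2, hsub1 hy.1⟩)
            _ ≤ volume (ball z r \ E) + ENNReal.ofReal (1 / 8) * (ENNReal.ofReal (t ^ 2) * c) :=
                add_le_add_right hEt _
        rw [h4] at hchain
        exact (ENNReal.add_le_add_iff_right hfin).mp hchain
      -- compare with the target radius
      have hbound : ENNReal.ofReal (r₀ ^ 2 / 8) * volume (ball z r) ≤ volume (ball z r \ E) := by
        refine le_trans ?_ key2
        rw [hVb, ← mul_assoc, ← ENNReal.ofReal_mul (by positivity)]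
        refine mul_le_mul_left (ENNReal.ofReal_le_ofReal ?_) c
        have htlb : r * r₀ ≤ t := le_min (by nlinarith) (by nlinarith)
        nlinarith [mul_le_mul htlb htlb (by positivity) ht0.le]
      have hsplit : volume (E ∩ ball z r) + volume (ball z r \ E) = volume (ball z r) := by
        rw [inter_comm]; exact measure_inter_add_diff _ hEmeas
      have hfin2 : ENNReal.ofReal (r₀ ^ 2 / 8) * volume (ball z r) ≠ ⊤ :=
        ENNReal.mul_ne_top ENNReal.ofReal_ne_top hbt
      have hfinal : volume (E ∩ ball z r) + ENNReal.ofReal (r₀ ^ 2 / 8) * volume (ball z r) ≤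
          ENNReal.ofReal (1 - r₀ ^ 2 / 8) * volume (ball z r) +
            ENNReal.ofReal (r₀ ^ 2 / 8) * volume (ball z r) := by
        calc volume (E ∩ ball z r) + ENNReal.ofReal (r₀ ^ 2 / 8) * volume (ball z r)
            ≤ volume (E ∩ ball z r) + volume (ball z r \ E) := add_le_add_right hbound _
          _ = volume (ball z r) := hsplit
          _ = (ENNReal.ofReal (1 - r₀ ^ 2 / 8) + ENNReal.ofReal (r₀ ^ 2 / 8)) * volume (ball z r) := by
              rw [← ENNReal.ofReal_add h78 (by positivity)]
              norm_num
          _ = _ := by rw [add_mul]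
      exact (ENNReal.add_le_add_iff_right hfin2).mp hfinal
    · -- large radii
      calc volume (E ∩ ball z r) ≤ volume E := measure_mono inter_subset_left
        _ ≤ ENNReal.ofReal (1 / 3) * c := hvolE
        _ ≤ ENNReal.ofReal ((1 - r₀ ^ 2 / 8) * r ^ 2) * c := by
            refine mul_le_mul_left (ENNReal.ofReal_le_ofReal ?_) c
            have h1 : (7/8 : ℝ) ≤ 1 - r₀ ^ 2 / 8 := by nlinarith
            have h2 : (1 : ℝ) ≤ r ^ 2 := by nlinarith
            calc (1/3 : ℝ) ≤ 7/8 * 1 := by norm_num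
              _ ≤ (1 - r₀ ^ 2 / 8) * r ^ 2 := mul_le_mul h1 h2 one_pos.le (by linarith)
        _ = ENNReal.ofReal (1 - r₀ ^ 2 / 8) * volume (ball z r) := by
            rw [hVb, ENNReal.ofReal_mul h78, mul_assoc]
  constructor
  · exact lt_of_le_of_lt key (ENNReal.ofReal_lt_one.mpr (by nlinarith))
  · -- points of E converging to x
    have hmem_E : ∀ p : EuclideanSpace ℝ (Fin 2), (∀ i, ∃ a : ℚ, p i = (a : ℝ)) → p ∈ E := by
      intro p hp
      have : p ∈ Set.range q := by rw [hq]; exact hp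
      obtain ⟨k, hk⟩ := this
      rw [hE]
      exact mem_iUnion.mpr ⟨k, by rw [← hk]; exact mem_ball_self (by positivity)⟩
    have hex : ∀ j : ℕ, ∃ p : EuclideanSpace ℝ (Fin 2),
        (∀ i, ∃ a : ℚ, p i = (a : ℝ)) ∧ dist p x < 1 / ((j : ℝ) + 1) := by
      intro j
      have hδ0' : (0 : ℝ) < 1 / (2 * ((j : ℝ) + 1)) := by positivity
      have hch : ∀ i : Fin 2, ∃ a : ℚ, |x i - (a : ℝ)| < 1 / (2 * ((j : ℝ) + 1)) :=
        fun i => exists_rat_near (x i) hδ0'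
      choose a ha using hch
      refine ⟨(WithLp.toLp 2 (fun i => (a i : ℝ)) : EuclideanSpace ℝ (Fin 2)), fun i => ⟨a i, rfl⟩, ?_⟩
      rw [EuclideanSpace.dist_eq]
      set D : ℝ := 1 / (2 * ((j : ℝ) + 1)) with hD
      have hpos : (0 : ℝ) < 1 / ((j : ℝ) + 1) := by positivity
      rw [Real.sqrt_lt' hpos]
      have hb : ∀ i : Fin 2, dist ((WithLp.toLp 2 (fun i => (a i : ℝ)) : EuclideanSpace ℝ (Fin 2)) i) (x i) ^ 2 < D ^ 2 := by
        intro i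
        have : dist ((a i : ℝ)) (x i) < D := by
          rw [Real.dist_eq, abs_sub_comm]; exact ha i
        exact pow_lt_pow_left₀ this dist_nonneg (by norm_num) |>.trans_le le_rfl
      have hsum : ∑ i : Fin 2, dist ((WithLp.toLp 2 (fun i => (a i : ℝ)) : EuclideanSpace ℝ (Fin 2)) i) (x i) ^ 2 < 2 * D ^ 2 := by
        rw [Fin.sum_univ_two]
        have h0 := hb 0
        have h1 := hb 1
        linarith
      refine hsum.trans_le ?_
      rw [hD]
      have h1 : (1 / (2 * ((j : ℝ) + 1))) ^ 2 = (1/4) * (1 / ((j : ℝ) + 1)) ^ 2 := by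
        have hj : ((j : ℝ) + 1) ≠ 0 := by positivity
        field_simp
        ring
      rw [h1]
      nlinarith [sq_nonneg (1 / ((j : ℝ) + 1))]
    choose xs hxs1 hxs2 using hex
    refine ⟨xs, ?_, fun j => maxFnInd_eq_one_of_mem hEopen (hmem_E _ (hxs1 j))⟩
    rw [tendsto_iff_dist_tendsto_zero]
    exact squeeze_zero (fun j => dist_nonneg) (fun j => (hxs2 j).le)
      tendsto_one_div_add_atTop_nhds_zero_nat
end
end

section
/- Banach–Zarecki (one direction): let V ⊂ ℝ be open and v : V → ℝ a continuous function of locally bounded variation which satisfies the Lusin property (images of Lebesgue-null subsets of V are Lebesgue-null). Then v is locally absolutely continuous on V. -/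
open MeasureTheory Metric Set Filter Topology
open scoped ENNReal NNReal
noncomputable section

lemma abs_sub_le_varFromTo {f : ℝ → ℝ} {s : Set ℝ} (hf : LocallyBoundedVariationOn f s)
    {x y : ℝ} (hx : x ∈ s) (hy : y ∈ s) (hxy : x ≤ y) :
    |f y - f x| ≤ variationOnFromTo f s x y := by
  calc
    |f y - f x| = dist (f x) (f y) := by rw [dist_comm, Real.dist_eq]
    _ ≤ variationOnFromTo f s x y := by
      rw [variationOnFromTo.eq_of_le f s hxy, dist_edist]
      apply ENNReal.toReal_mono (hf x y hx hy)
      apply eVariationOn.edist_le f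
      exacts [⟨hx, le_rfl, hxy⟩, ⟨hy, hxy, le_rfl⟩]

lemma image_measure_ge {v : ℝ → ℝ} {s t : ℝ} (hcont : ContinuousOn v (Set.Icc s t))
    (hst : s ≤ t) :
    ENNReal.ofReal |v t - v s| ≤ volume (v '' Set.Icc s t) := by
  have hconn : IsPreconnected (v '' Set.Icc s t) := (isPreconnected_Icc).image v hcont
  have hs : v s ∈ v '' Set.Icc s t := ⟨s, ⟨le_rfl, hst⟩, rfl⟩
  have ht : v t ∈ v '' Set.Icc s t := ⟨t, ⟨hst, le_rfl⟩, rfl⟩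
  rcases le_total (v s) (v t) with h | h
  · calc ENNReal.ofReal |v t - v s| = volume (Set.Icc (v s) (v t)) := by
          rw [Real.volume_Icc, abs_of_nonneg (by linarith)]
        _ ≤ _ := measure_mono (hconn.Icc_subset hs ht)
  · calc ENNReal.ofReal |v t - v s| = volume (Set.Icc (v t) (v s)) := by
          rw [Real.volume_Icc, abs_of_nonpos (by linarith), neg_sub]
        _ ≤ _ := measure_mono (hconn.Icc_subset ht hs)

lemma image_meas_le {v : ℝ → ℝ} {s : Set ℝ} (hs : MeasurableSet s)
    (hsD : ∀ x ∈ s, DifferentiableAt ℝ v x) :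
    volume (v '' s) ≤ ∫⁻ x in s, ENNReal.ofReal |deriv v x| := by
  have h := MeasureTheory.addHaar_image_le_lintegral_abs_det_fderiv (volume : Measure ℝ) hs
    (f' := fun x => ContinuousLinearMap.smulRight (1 : ℝ →L[ℝ] ℝ) (deriv v x))
    (fun x hx => ((hsD x hx).hasDerivAt.hasFDerivAt).hasFDerivWithinAt)
  simpa [ContinuousLinearMap.det_toSpanSingleton] using h

theorem stmt9' (V : Set ℝ) (hV : IsOpen V) (v : ℝ → ℝ)
    (hcont : ContinuousOn v V)
    (hbv : LocallyBoundedVariationOn v V)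
    (hLusin : ∀ N : Set ℝ, N ⊆ V → volume N = 0 → volume (v '' N) = 0) :
    ∀ a b : ℝ, a ≤ b → Set.Icc a b ⊆ V →
    ∀ ε : ℝ, 0 < ε → ∃ δ : ℝ, 0 < δ ∧
    ∀ (n : ℕ) (s t : Fin n → ℝ),
      (∀ i, a ≤ s i ∧ s i ≤ t i ∧ t i ≤ b) →
      (∀ i j, i ≠ j → Disjoint (Set.Ioo (s i) (t i)) (Set.Ioo (s j) (t j))) →
      (∑ i, (t i - s i)) < δ → (∑ i, |v (t i) - v (s i)|) < ε := by
  intro a b hab hsub ε hε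
  have haV : a ∈ V := hsub ⟨le_rfl, hab⟩
  -- the clamped variation function, a monotone function on all of ℝ
  set c : ℝ → ℝ := fun x => max a (min b x) with hc
  have hc_mem : ∀ x, c x ∈ Set.Icc a b := fun x =>
    ⟨le_max_left _ _, max_le hab (min_le_left _ _)⟩
  have hc_mono : Monotone c := fun x y hxy => max_le_max le_rfl (min_le_min le_rfl hxy)
  have hc_eq : ∀ x ∈ Set.Icc a b, c x = x := fun x hx => by
    simp only [hc]; rw [min_eq_right hx.2, max_eq_right hx.1]
  set F : ℝ → ℝ := fun x => variationOnFromTo v V a (c x) with hFdef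
  have hFmono : Monotone F := fun x y hxy =>
    (variationOnFromTo.monotoneOn hbv haV) (hsub (hc_mem x)) (hsub (hc_mem y)) (hc_mono hxy)
  have hFslope : ∀ x y, x ∈ Set.Icc a b → y ∈ Set.Icc a b → x ≤ y →
      |v y - v x| ≤ F y - F x := by
    intro x y hx hy hxy
    have h1 : F y - F x = variationOnFromTo v V x y := by
      simp only [hFdef, hc_eq x hx, hc_eq y hy]
      rw [← variationOnFromTo.add hbv haV (hsub hx) (hsub hy)]
      ring
    rw [h1]
    exact abs_sub_le_varFromTo hbv (hsub hx) (hsub hy) hxy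
  -- differentiability set
  set D : Set ℝ := {x | DifferentiableAt ℝ v x} with hDdef
  have hD : MeasurableSet D := measurableSet_of_differentiableAt ℝ v
  have haeD : ∀ᵐ x, x ∈ V → x ∈ D := by
    filter_upwards [hbv.ae_differentiableWithinAt_of_mem] with x hx hxV
    exact (hx hxV).differentiableAt (hV.mem_nhds hxV)
  have hVD : volume (V \ D) = 0 := by
    rw [measure_eq_zero_iff_ae_notMem]
    filter_upwards [haeD] with x hx
    rintro ⟨hxV, hxD⟩
    exact hxD (hx hxV)
  have hN : volume (v '' (V \ D)) = 0 := hLusin _ diff_subset hVD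
  set g : ℝ → ℝ≥0∞ := fun x => ENNReal.ofReal |deriv v x| with hgdef
  -- Claim A: image measure bound
  have claimA : ∀ s : Set ℝ, MeasurableSet s → s ⊆ V →
      volume (v '' s) ≤ ∫⁻ x in s, g x := by
    intro s hs hsV
    calc volume (v '' s) ≤ volume (v '' (s ∩ D)) + volume (v '' (s \ D)) := by
          conv_lhs => rw [← Set.inter_union_diff s D]
          rw [Set.image_union]
          exact measure_union_le _ _
      _ ≤ (∫⁻ x in s ∩ D, g x) + 0 := add_le_add
          (image_meas_le (hs.inter hD) (fun x hx => hx.2))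
          (le_of_eq (measure_mono_null
            (Set.image_mono (Set.diff_subset_diff_left hsV)) hN))
      _ ≤ ∫⁻ x in s, g x := by
          rw [add_zero]; exact lintegral_mono_set Set.inter_subset_left
  -- Claim B: finiteness of ∫ g over Icc a b
  set μF := hFmono.stieltjesFunction.measure with hμF
  set ρ : ℝ → ℝ≥0∞ := μF.rnDeriv volume with hρdef
  have hcomp : ∀ᵐ x, x ∈ Set.Ioo a b → g x ≤ ρ x := by
    filter_upwards [hFmono.ae_hasDerivAt, Measure.rnDeriv_lt_top μF volume,
      haeD] with x hx1 hx2 hx3 hxI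
    have hxV : x ∈ V := hsub (Set.Ioo_subset_Icc_self hxI)
    have hvd : HasDerivAt v (deriv v x) x := (hx3 hxV).hasDerivAt
    have key : |deriv v x| ≤ (ρ x).toReal := by
      have hmono : 𝓝[>] x ≤ 𝓝[≠] x :=
        nhdsWithin_mono x (fun y hy => ne_of_gt hy)
      have t1 : Tendsto (fun y => |slope v x y|) (𝓝[>] x) (𝓝 |deriv v x|) :=
        ((hasDerivAt_iff_tendsto_slope.1 hvd).mono_left hmono).abs
      have t2 : Tendsto (slope F x) (𝓝[>] x) (𝓝 ((ρ x).toReal)) :=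
        (hasDerivAt_iff_tendsto_slope.1 hx1).mono_left hmono
      refine le_of_tendsto_of_tendsto t1 t2 ?_
      filter_upwards [Ioo_mem_nhdsGT_of_mem ⟨le_rfl, hxI.2⟩] with y hy
      have hxy : x < y := hy.1
      have h1 : |v y - v x| ≤ F y - F x :=
        hFslope x y (Set.Ioo_subset_Icc_self hxI)
          ⟨le_of_lt (lt_of_le_of_lt hxI.1.le hxy), hy.2.le⟩ hxy.le
      rw [slope_def_field, slope_def_field, abs_div, abs_of_pos (by linarith : (0:ℝ) < y - x)]
      exact div_le_div_of_nonneg_right h1 (by linarith) |>.trans_eq rfl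
    calc g x = ENNReal.ofReal |deriv v x| := rfl
      _ ≤ ENNReal.ofReal (ρ x).toReal := ENNReal.ofReal_le_ofReal key
      _ = ρ x := ENNReal.ofReal_toReal hx2.ne
  have claimB : (∫⁻ x in Set.Icc a b, g x) ≠ ∞ := by
    have h1 : (∫⁻ x in Set.Icc a b, g x) = ∫⁻ x in Set.Ioo a b, g x :=
      (setLIntegral_congr Ioo_ae_eq_Icc).symm
    have h2 : (∫⁻ x in Set.Ioo a b, g x) ≤ ∫⁻ x in Set.Ioo a b, ρ x := by
      apply lintegral_mono_ae
      filter_upwards [ae_restrict_mem measurableSet_Ioo,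
        hcomp.filter_mono (ae_mono Measure.restrict_le_self)] with x hx1 hx2
      exact hx2 hx1
    have h3 : (∫⁻ x in Set.Ioo a b, ρ x) < ∞ := by
      apply Measure.lintegral_rnDeriv_lt_top_of_measure_ne_top
      exact ne_top_of_le_ne_top (isCompact_Icc.measure_lt_top (μ := μF)).ne
        (measure_mono Set.Ioo_subset_Icc_self)
    rw [h1]
    exact (lt_of_le_of_lt h2 h3).ne
  -- absolute continuity of the integral of g
  obtain ⟨δ', hδ'pos, hδ'⟩ := exists_pos_setLIntegral_lt_of_measure_lt
    (μ := volume.restrict (Set.Icc a b)) (f := g) claimB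
    (by exact (ENNReal.ofReal_pos.2 hε).ne' : ENNReal.ofReal ε ≠ 0)
  have hmin_ne : min 1 δ' ≠ 0 := (lt_min one_pos hδ'pos).ne'
  have hmin_top : min 1 δ' ≠ ∞ := ne_top_of_le_ne_top ENNReal.one_ne_top (min_le_left _ _)
  refine ⟨(min 1 δ').toReal, ENNReal.toReal_pos hmin_ne hmin_top, ?_⟩
  intro n s t hint hdisj hsum
  set U : Set ℝ := ⋃ i, Set.Ioo (s i) (t i) with hUdef
  have hUmeas : MeasurableSet U := MeasurableSet.iUnion fun i => measurableSet_Ioo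
  have hIccsub : ∀ i, Set.Icc (s i) (t i) ⊆ Set.Icc a b := fun i x hx =>
    ⟨le_trans (hint i).1 hx.1, le_trans hx.2 (hint i).2.2⟩
  have hUsub : U ⊆ Set.Icc a b := Set.iUnion_subset fun i =>
    (Set.Ioo_subset_Icc_self).trans (hIccsub i)
  have hμU : (volume.restrict (Set.Icc a b)) U < δ' := by
    have h1 : (volume.restrict (Set.Icc a b)) U ≤ volume U :=
      Measure.restrict_le_self U
    have h2 : volume U ≤ ∑ i, volume (Set.Ioo (s i) (t i)) := by
      refine (measure_iUnion_le _).trans ?_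
      rw [tsum_fintype]
    have h3 : (∑ i, volume (Set.Ioo (s i) (t i)))
        = ENNReal.ofReal (∑ i, (t i - s i)) := by
      rw [ENNReal.ofReal_sum_of_nonneg (fun i _ => sub_nonneg.2 (hint i).2.1)]
      exact Finset.sum_congr rfl fun i _ => Real.volume_Ioo
    have hsum_nn : 0 ≤ ∑ i, (t i - s i) :=
      Finset.sum_nonneg fun i _ => sub_nonneg.2 (hint i).2.1
    have h4 : ENNReal.ofReal (∑ i, (t i - s i)) < min 1 δ' := by
      rw [← ENNReal.ofReal_toReal hmin_top]
      exact (ENNReal.ofReal_lt_ofReal_iff_of_nonneg hsum_nn).2 hsum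
    calc (volume.restrict (Set.Icc a b)) U ≤ volume U := h1
      _ ≤ _ := h2
      _ = _ := h3
      _ < min 1 δ' := h4
      _ ≤ δ' := min_le_right _ _
  have key := hδ' U hμU
  rw [Measure.restrict_restrict hUmeas, Set.inter_eq_self_of_subset_left hUsub] at key
  have hdisj' : Pairwise (Function.onFun Disjoint fun i => Set.Ioo (s i) (t i)) :=
    fun i j hij => hdisj i j hij
  have chain : ENNReal.ofReal (∑ i, |v (t i) - v (s i)|) ≤ ∫⁻ x in U, g x := by
    rw [ENNReal.ofReal_sum_of_nonneg (fun i _ => abs_nonneg _)]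
    calc ∑ i, ENNReal.ofReal |v (t i) - v (s i)|
        ≤ ∑ i, volume (v '' Set.Icc (s i) (t i)) :=
          Finset.sum_le_sum fun i _ =>
            image_measure_ge (hcont.mono ((hIccsub i).trans hsub)) (hint i).2.1
      _ ≤ ∑ i, ∫⁻ x in Set.Icc (s i) (t i), g x :=
          Finset.sum_le_sum fun i _ =>
            claimA _ measurableSet_Icc ((hIccsub i).trans hsub)
      _ = ∑ i, ∫⁻ x in Set.Ioo (s i) (t i), g x :=
          Finset.sum_congr rfl fun i _ => (setLIntegral_congr Ioo_ae_eq_Icc).symm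
      _ = ∫⁻ x in U, g x := by
          rw [lintegral_iUnion (fun i => measurableSet_Ioo) hdisj', tsum_fintype]
  have : ENNReal.ofReal (∑ i, |v (t i) - v (s i)|) < ENNReal.ofReal ε :=
    lt_of_le_of_lt chain key
  exact (ENNReal.ofReal_lt_ofReal_iff_of_nonneg
    (Finset.sum_nonneg fun i _ => abs_nonneg _)).1 this

/-- Absolute continuity of `v` on the interval `[a,b]`, via the standard ε–δ
definition with finitely many disjoint subintervals. -/
def AbsContOnIcc (v : ℝ → ℝ) (a b : ℝ) : Prop :=
  ∀ ε : ℝ, 0 < ε → ∃ δ : ℝ, 0 < δ ∧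
    ∀ (n : ℕ) (s t : Fin n → ℝ),
      (∀ i, a ≤ s i ∧ s i ≤ t i ∧ t i ≤ b) →
      (∀ i j, i ≠ j → Disjoint (Set.Ioo (s i) (t i)) (Set.Ioo (s j) (t j))) →
      (∑ i, (t i - s i)) < δ → (∑ i, |v (t i) - v (s i)|) < ε

/-- Banach–Zarecki, one direction: a continuous function of locally
bounded variation on an open set `V ⊆ ℝ` satisfying the Lusin property (N) is
locally absolutely continuous: it is absolutely continuous on every compact
subinterval of `V`. -/
theorem stmt9 (V : Set ℝ) (hV : IsOpen V) (v : ℝ → ℝ)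
    (hcont : ContinuousOn v V)
    (hbv : LocallyBoundedVariationOn v V)
    (hLusin : ∀ N : Set ℝ, N ⊆ V → volume N = 0 → volume (v '' N) = 0) :
    ∀ a b : ℝ, a ≤ b → Set.Icc a b ⊆ V → AbsContOnIcc v a b := by
  intro a b hab hsub ε hε
  exact stmt9' V hV v hcont hbv hLusin a b hab hsub ε hε
end
end
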